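/- For θ ∈ (0, π/2) and φ ∈ ℝ, there is no 2×2 (or larger, after padding with zero operators) unitary U such that applying U to the pair K₁ = [[cos θ, sin θ·e^{iφ}],[0,0]], K₂ = [[0,0],[sin θ, -cos θ·e^{iφ}]] yields operators all of which are diagonal, antidiagonal, or matrix-unit multiples. -/
import Mathlib


open Matrix Complex

/-- A 2×2 matrix is strictly incoherent: diagonal, antidiagonal, or a
matrix-unit multiple (the latter being a special case of the former two). -/
def SIOform (M : Matrix (Fin 2) (Fin 2) ℂ) : Prop :=
  (M 0 1 = 0 ∧ M 1 0 = 0) ∨ (M 0 0 = 0 ∧ M 1 1 = 0)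

theorem stmt_10 (θ φ : ℝ) (hθ : θ ∈ Set.Ioo 0 (Real.pi / 2)) :
    let K₁ : Matrix (Fin 2) (Fin 2) ℂ :=
      !![(Real.cos θ : ℂ), (Real.sin θ : ℂ) * Complex.exp (φ * Complex.I); 0, 0]
    let K₂ : Matrix (Fin 2) (Fin 2) ℂ :=
      !![0, 0; (Real.sin θ : ℂ), -(Real.cos θ : ℂ) * Complex.exp (φ * Complex.I)]
    ∀ n : ℕ, 2 ≤ n →
      ∀ U ∈ Matrix.unitaryGroup (Fin n) ℂ,
        ¬ ∀ i : Fin n, SIOform (∑ j : Fin n,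
            U i j • (if (j : ℕ) = 0 then K₁ else if (j : ℕ) = 1 then K₂ else 0)) := by
  intro K₁ K₂ n hn U hU h
  have hc : (Real.cos θ : ℂ) ≠ 0 :=
    Complex.ofReal_ne_zero.mpr (ne_of_gt (Real.cos_pos_of_mem_Ioo
      ⟨by linarith [hθ.1, Real.pi_pos], hθ.2⟩))
  have hs : (Real.sin θ : ℂ) ≠ 0 :=
    Complex.ofReal_ne_zero.mpr (ne_of_gt (Real.sin_pos_of_pos_of_lt_pi hθ.1
      (by linarith [Real.pi_pos, hθ.2])))
  have he : Complex.exp (φ * Complex.I) ≠ 0 := Complex.exp_ne_zero _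
  set j0 : Fin n := ⟨0, by omega⟩ with hj0
  have hz : ∀ i, U i j0 = 0 := by
    intro i
    have e01 : (∑ j : Fin n, U i j • (if (j:ℕ)=0 then K₁ else if (j:ℕ)=1 then K₂ else 0)) 0 1
        = U i j0 * ((Real.sin θ : ℂ) * Complex.exp (φ * Complex.I)) := by
      rw [Matrix.sum_apply]
      rw [Finset.sum_eq_single j0]
      · simp [j0, K₁]
      · intro j _ hj
        have hne : (j : ℕ) ≠ 0 := fun h0 => hj (Fin.ext h0)
        rw [Matrix.smul_apply, if_neg hne]
        split_ifs
        · simp [K₂]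
        · simp
      · intro hmem; exact absurd (Finset.mem_univ j0) hmem
    have e00 : (∑ j : Fin n, U i j • (if (j:ℕ)=0 then K₁ else if (j:ℕ)=1 then K₂ else 0)) 0 0
        = U i j0 * (Real.cos θ : ℂ) := by
      rw [Matrix.sum_apply]
      rw [Finset.sum_eq_single j0]
      · simp [j0, K₁]
      · intro j _ hj
        have hne : (j : ℕ) ≠ 0 := fun h0 => hj (Fin.ext h0)
        rw [Matrix.smul_apply, if_neg hne]
        split_ifs
        · simp [K₂]
        · simp
      · intro hmem; exact absurd (Finset.mem_univ j0) hmem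
    rcases h i with ⟨h1, _⟩ | ⟨h1, _⟩
    · rw [e01] at h1
      rcases mul_eq_zero.mp h1 with h1 | h1
      · exact h1
      · exact absurd h1 (mul_ne_zero hs he)
    · rw [e00] at h1
      rcases mul_eq_zero.mp h1 with h1 | h1
      · exact h1
      · exact absurd h1 hc
  have hU1 : (star U * U) j0 j0 = 1 := by rw [hU.1]; simp
  have hU0 : (star U * U) j0 j0 = 0 := by
    simp [Matrix.mul_apply, hz]
  exact one_ne_zero (hU1.symm.trans hU0)
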